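/- Let n ≥ 2 and let i ∈ I_n with e(i) ≠ 0 in the cyclotomic KLR algebra R_n. Then y_n² e(i) = 0 in R_n. -/

import Mathlib

open scoped BigOperators

/-- `I_n`: the sequences `(i_1,…,i_n)` of elements of `ZMod n` that are permutations of
`(0,1,…,n−1)`, encoded as bijections `Fin n → ZMod n` (position `k : Fin n` is the
0-based version of the paper's position `k+1`). -/
def KLRSeq (n : ℕ) : Type := {f : Fin n → ZMod n // Function.Bijective f}

instance (n : ℕ) : Finite (KLRSeq n) := by
  unfold KLRSeq
  rcases Nat.eq_zero_or_pos n with h | h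
  · subst h
    have : IsEmpty {f : Fin 0 → ZMod 0 // Function.Bijective f} := by
      constructor
      rintro ⟨f, hf⟩
      obtain ⟨x, -⟩ := hf.2 0
      exact x.elim0
    infer_instance
  · haveI : NeZero n := ⟨by omega⟩
    infer_instance

noncomputable instance (n : ℕ) : Fintype (KLRSeq n) := Fintype.ofFinite _

noncomputable instance (n : ℕ) : DecidableEq (KLRSeq n) := Classical.decEq _

/-- Generators of the KLR algebra: idempotents `e(i)`, dots `y_k`, crossings `ψ_k`. -/
inductive KLRGen (n : ℕ) : Type
  | e : KLRSeq n → KLRGen n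
  | y : Fin n → KLRGen n
  | psi : Fin (n - 1) → KLRGen n

/-- The free algebra on the KLR generators. -/
abbrev KLRFree (K : Type) [Field K] (n : ℕ) := FreeAlgebra K (KLRGen n)

namespace KLR

/-- `e(i)` in the free algebra. -/
def E (K : Type) [Field K] {n : ℕ} (i : KLRSeq n) : KLRFree K n :=
  FreeAlgebra.ι K (KLRGen.e i)

/-- `y_k` in the free algebra. -/
def Y (K : Type) [Field K] {n : ℕ} (k : Fin n) : KLRFree K n :=
  FreeAlgebra.ι K (KLRGen.y k)

/-- `ψ_k` in the free algebra. -/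
def P (K : Type) [Field K] {n : ℕ} (k : Fin (n - 1)) : KLRFree K n :=
  FreeAlgebra.ι K (KLRGen.psi k)

/-- The first strand position crossed by `ψ_k`. -/
def pos0 {n : ℕ} (k : Fin (n - 1)) : Fin n := ⟨k.val, by have := k.isLt; omega⟩

/-- The second strand position crossed by `ψ_k`. -/
def pos1 {n : ℕ} (k : Fin (n - 1)) : Fin n := ⟨k.val + 1, by have := k.isLt; omega⟩

/-- The sequence `s_k · i`, with entries `k` and `k+1` swapped. -/
def swapSeq {n : ℕ} (k : Fin (n - 1)) (i : KLRSeq n) : KLRSeq n :=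
  ⟨i.1 ∘ Equiv.swap (pos0 k) (pos1 k), i.2.comp (Equiv.swap _ _).bijective⟩

/-- The right-hand side of the quadratic relation `ψ_k² e(i) = …`, depending on how the
colors `i_k` and `i_{k+1}` are related in the quiver of affine type A on `ZMod n`
(`a → b` iff `b = a + 1` and `a ≠ b + 1`, etc.). -/
noncomputable def quadTerm (K : Type) [Field K] {n : ℕ} (k : Fin (n - 1)) (i : KLRSeq n) :
    KLRFree K n :=
  let a := i.1 (pos0 k)
  let b := i.1 (pos1 k)
  if b = a + 1 ∧ a = b + 1 then
    (Y K (pos1 k) - Y K (pos0 k)) * ((Y K (pos0 k) - Y K (pos1 k)) * E K i)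
  else if b = a + 1 ∧ a ≠ b + 1 then (Y K (pos1 k) - Y K (pos0 k)) * E K i
  else if a = b + 1 ∧ b ≠ a + 1 then (Y K (pos0 k) - Y K (pos1 k)) * E K i
  else E K i

/-- The defining relations of the cyclotomic KLR algebra `R_n` (for `Λ = Λ_0`):
the KLR relations together with the cyclotomic relations `y_1 e(i) = 0` (if `i_1 = 0`) and
`e(i) = 0` (if `i_1 ≠ 0`). -/
inductive Rel (K : Type) [Field K] (n : ℕ) : KLRFree K n → KLRFree K n → Prop
  | idem (i j : KLRSeq n) : Rel K n (E K i * E K j) (if i = j then E K i else 0)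
  | sum_eq_one : Rel K n (∑ i : KLRSeq n, E K i) 1
  | ye (k : Fin n) (i : KLRSeq n) : Rel K n (Y K k * E K i) (E K i * Y K k)
  | psie (k : Fin (n - 1)) (i : KLRSeq n) :
      Rel K n (P K k * E K i) (E K (swapSeq k i) * P K k)
  | yy (k l : Fin n) : Rel K n (Y K k * Y K l) (Y K l * Y K k)
  | psiy (k : Fin (n - 1)) (l : Fin n) (h : l.val ≠ k.val ∧ l.val ≠ k.val + 1) :
      Rel K n (P K k * Y K l) (Y K l * P K k)
  | psipsi (k l : Fin (n - 1)) (h : k.val + 1 < l.val ∨ l.val + 1 < k.val) :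
      Rel K n (P K k * P K l) (P K l * P K k)
  | psiy1 (k : Fin (n - 1)) (i : KLRSeq n) :
      Rel K n (P K k * (Y K (pos1 k) * E K i)) (Y K (pos0 k) * (P K k * E K i))
  | ypsi (k : Fin (n - 1)) (i : KLRSeq n) :
      Rel K n (Y K (pos1 k) * (P K k * E K i)) (P K k * (Y K (pos0 k) * E K i))
  | sq (k : Fin (n - 1)) (i : KLRSeq n) :
      Rel K n (P K k * (P K k * E K i)) (quadTerm K k i)
  | braid (k : Fin (n - 1)) (h : k.val + 1 < n - 1) (i : KLRSeq n) :
      Rel K n (P K k * (P K ⟨k.val + 1, h⟩ * (P K k * E K i)))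
              (P K ⟨k.val + 1, h⟩ * (P K k * (P K ⟨k.val + 1, h⟩ * E K i)))
  | cyc0 (hn : 0 < n) (i : KLRSeq n) (h : i.1 ⟨0, hn⟩ = 0) :
      Rel K n (Y K ⟨0, hn⟩ * E K i) 0
  | cyc1 (hn : 0 < n) (i : KLRSeq n) (h : i.1 ⟨0, hn⟩ ≠ 0) :
      Rel K n (E K i) 0

end KLR

/-- The cyclotomic KLR algebra `R_n` (quiver of affine type A on `ZMod n`, `α` the sum of
all simple roots, `Λ = Λ_0`): the quotient of the free algebra on the generators by the
two-sided ideal generated by the relation differences and the cyclotomic generators. -/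
abbrev CKLR (K : Type) [Field K] (n : ℕ) := RingQuot (KLR.Rel K n)

namespace KLR

/-- The quotient map from the free algebra to `R_n`. -/
noncomputable def mk (K : Type) [Field K] (n : ℕ) : KLRFree K n →ₐ[K] CKLR K n :=
  RingQuot.mkAlgHom K (Rel K n)

/-- The idempotent `e(i)` in `R_n`. -/
noncomputable def e (K : Type) [Field K] {n : ℕ} (i : KLRSeq n) : CKLR K n := mk K n (E K i)

/-- The dot `y_k` in `R_n`. -/
noncomputable def y (K : Type) [Field K] {n : ℕ} (k : Fin n) : CKLR K n := mk K n (Y K k)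

/-- The crossing `ψ_k` in `R_n`. -/
noncomputable def p (K : Type) [Field K] {n : ℕ} (k : Fin (n - 1)) : CKLR K n := mk K n (P K k)

end KLR

namespace KLR

variable {K : Type} [Field K] {n : ℕ}

lemma mk_rel {x z : KLRFree K n} (h : Rel K n x z) : mk K n x = mk K n z :=
  RingQuot.mkAlgHom_rel K h

lemma e_def (i : KLRSeq n) : e K i = mk K n (E K i) := rfl
lemma y_def (k : Fin n) : y K k = mk K n (Y K k) := rfl
lemma p_def (k : Fin (n-1)) : p K k = mk K n (P K k) := rfl

lemma ye (k : Fin n) (i : KLRSeq n) : y K k * e K i = e K i * y K k := by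
  simp only [e_def, y_def, ← map_mul]; exact mk_rel (Rel.ye k i)

lemma pe (k : Fin (n-1)) (i : KLRSeq n) : p K k * e K i = e K (swapSeq k i) * p K k := by
  simp only [e_def, p_def, ← map_mul]; exact mk_rel (Rel.psie k i)

lemma yy (k l : Fin n) : y K k * y K l = y K l * y K k := by
  simp only [y_def, ← map_mul]; exact mk_rel (Rel.yy k l)

lemma ypsi (k : Fin (n-1)) (i : KLRSeq n) :
    y K (pos1 k) * (p K k * e K i) = p K k * (y K (pos0 k) * e K i) := by
  simp only [e_def, y_def, p_def, ← map_mul]; exact mk_rel (Rel.ypsi k i)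

lemma sq' (k : Fin (n-1)) (i : KLRSeq n) :
    p K k * (p K k * e K i) = mk K n (quadTerm K k i) := by
  simp only [e_def, p_def, ← map_mul]; exact mk_rel (Rel.sq k i)

lemma cyc0' (hn : 0 < n) (i : KLRSeq n) (h : i.1 ⟨0, hn⟩ = 0) : y K ⟨0, hn⟩ * e K i = 0 := by
  simp only [e_def, y_def, ← map_mul]
  rw [mk_rel (Rel.cyc0 hn i h), map_zero]

lemma cyc1' (hn : 0 < n) (i : KLRSeq n) (h : i.1 ⟨0, hn⟩ ≠ 0) : e K i = 0 := by
  rw [e_def, mk_rel (Rel.cyc1 hn i h), map_zero]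

lemma sq_perp (k : Fin (n-1)) (i : KLRSeq n)
    (h1 : i.1 (pos1 k) ≠ i.1 (pos0 k) + 1) (h2 : i.1 (pos0 k) ≠ i.1 (pos1 k) + 1) :
    p K k * (p K k * e K i) = e K i := by
  rw [sq']
  simp only [quadTerm]
  rw [if_neg (by tauto), if_neg (by tauto), if_neg (by tauto)]
  rfl

lemma sq_right (k : Fin (n-1)) (i : KLRSeq n)
    (h1 : i.1 (pos1 k) = i.1 (pos0 k) + 1) (h2 : i.1 (pos0 k) ≠ i.1 (pos1 k) + 1) :
    p K k * (p K k * e K i) = (y K (pos1 k) - y K (pos0 k)) * e K i := by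
  rw [sq']
  simp only [quadTerm]
  rw [if_neg (by tauto), if_pos ⟨h1, h2⟩]
  simp only [map_mul, map_sub]
  rfl

lemma sq_left (k : Fin (n-1)) (i : KLRSeq n)
    (h1 : i.1 (pos0 k) = i.1 (pos1 k) + 1) (h2 : i.1 (pos1 k) ≠ i.1 (pos0 k) + 1) :
    p K k * (p K k * e K i) = (y K (pos0 k) - y K (pos1 k)) * e K i := by
  rw [sq']
  simp only [quadTerm]
  rw [if_neg (by tauto), if_neg (by tauto), if_pos ⟨h1, h2⟩]
  simp only [map_mul, map_sub]
  rfl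

lemma sq_both (k : Fin (n-1)) (i : KLRSeq n)
    (h1 : i.1 (pos1 k) = i.1 (pos0 k) + 1) (h2 : i.1 (pos0 k) = i.1 (pos1 k) + 1) :
    p K k * (p K k * e K i)
      = (y K (pos1 k) - y K (pos0 k)) * ((y K (pos0 k) - y K (pos1 k)) * e K i) := by
  rw [sq']
  simp only [quadTerm]
  rw [if_pos ⟨h1, h2⟩]
  simp only [map_mul, map_sub]
  rfl

end KLR
namespace KLR

variable {K : Type} [Field K] {n : ℕ}

lemma pe_zero (k : Fin (n-1)) (i : KLRSeq n) (hz : e K (swapSeq k i) = 0) :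
    p K k * e K i = 0 := by
  rw [pe, hz, zero_mul]

lemma pp_zero (k : Fin (n-1)) (i : KLRSeq n) (hz : e K (swapSeq k i) = 0) :
    p K k * (p K k * e K i) = 0 := by
  rw [pe_zero k i hz, mul_zero]

lemma perp_core (k : Fin (n-1)) (i : KLRSeq n)
    (hz : y K (pos0 k) * e K (swapSeq k i) = 0) :
    y K (pos1 k) * (p K k * (p K k * e K i)) = 0 := by
  rw [pe k i, ← mul_assoc (p K k) (e K (swapSeq k i)) (p K k), ← mul_assoc,
    ypsi k (swapSeq k i), hz, mul_zero, zero_mul]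

lemma perp0 (k : Fin (n-1)) (i : KLRSeq n)
    (h1 : i.1 (pos1 k) ≠ i.1 (pos0 k) + 1) (h2 : i.1 (pos0 k) ≠ i.1 (pos1 k) + 1)
    (hz : e K (swapSeq k i) = 0) : e K i = 0 := by
  rw [← sq_perp k i h1 h2, pe_zero k i hz, mul_zero]

lemma perp1 (k : Fin (n-1)) (i : KLRSeq n)
    (h1 : i.1 (pos1 k) ≠ i.1 (pos0 k) + 1) (h2 : i.1 (pos0 k) ≠ i.1 (pos1 k) + 1)
    (hz : y K (pos0 k) * e K (swapSeq k i) = 0) : y K (pos1 k) * e K i = 0 := by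
  rw [← sq_perp k i h1 h2]
  exact perp_core k i hz

lemma adjR0 (k : Fin (n-1)) (i : KLRSeq n)
    (h1 : i.1 (pos1 k) = i.1 (pos0 k) + 1) (h2 : i.1 (pos0 k) ≠ i.1 (pos1 k) + 1)
    (hz : e K (swapSeq k i) = 0) (hy : y K (pos0 k) * e K i = 0) :
    y K (pos1 k) * e K i = 0 := by
  have h := sq_right (K := K) k i h1 h2
  rw [pp_zero k i hz] at h
  have h' : y K (pos1 k) * e K i - y K (pos0 k) * e K i = 0 := by
    rw [← sub_mul (y K (pos1 k)) (y K (pos0 k)) (e K i)]; exact h.symm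
  rw [sub_eq_zero] at h'
  rw [h', hy]

lemma adjL0 (k : Fin (n-1)) (i : KLRSeq n)
    (h1 : i.1 (pos0 k) = i.1 (pos1 k) + 1) (h2 : i.1 (pos1 k) ≠ i.1 (pos0 k) + 1)
    (hz : e K (swapSeq k i) = 0) (hy : y K (pos0 k) * e K i = 0) :
    y K (pos1 k) * e K i = 0 := by
  have h := sq_left (K := K) k i h1 h2
  rw [pp_zero k i hz] at h
  have h' : y K (pos0 k) * e K i - y K (pos1 k) * e K i = 0 := by
    rw [← sub_mul (y K (pos0 k)) (y K (pos1 k)) (e K i)]; exact h.symm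
  rw [sub_eq_zero] at h'
  rw [← h', hy]

lemma adjR1 (k : Fin (n-1)) (i : KLRSeq n)
    (h1 : i.1 (pos1 k) = i.1 (pos0 k) + 1) (h2 : i.1 (pos0 k) ≠ i.1 (pos1 k) + 1)
    (hz : y K (pos0 k) * e K (swapSeq k i) = 0) (hy : y K (pos0 k) * e K i = 0) :
    y K (pos1 k) * (y K (pos1 k) * e K i) = 0 := by
  have key : y K (pos1 k) * ((y K (pos1 k) - y K (pos0 k)) * e K i) = 0 := by
    rw [← sq_right k i h1 h2]; exact perp_core k i hz
  rw [sub_mul, mul_sub, hy, mul_zero, sub_zero] at key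
  exact key

lemma adjL1 (k : Fin (n-1)) (i : KLRSeq n)
    (h1 : i.1 (pos0 k) = i.1 (pos1 k) + 1) (h2 : i.1 (pos1 k) ≠ i.1 (pos0 k) + 1)
    (hz : y K (pos0 k) * e K (swapSeq k i) = 0) (hy : y K (pos0 k) * e K i = 0) :
    y K (pos1 k) * (y K (pos1 k) * e K i) = 0 := by
  have key : y K (pos1 k) * ((y K (pos0 k) - y K (pos1 k)) * e K i) = 0 := by
    rw [← sq_left k i h1 h2]; exact perp_core k i hz
  rw [sub_mul, mul_sub, hy, mul_zero, zero_sub, neg_eq_zero] at key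
  exact key

lemma swap_val0 (k : Fin (n-1)) (i : KLRSeq n) :
    (swapSeq k i).1 (pos0 k) = i.1 (pos1 k) := by
  show i.1 (Equiv.swap (pos0 k) (pos1 k) (pos0 k)) = _
  rw [Equiv.swap_apply_left]

lemma swap_val1 (k : Fin (n-1)) (i : KLRSeq n) :
    (swapSeq k i).1 (pos1 k) = i.1 (pos0 k) := by
  show i.1 (Equiv.swap (pos0 k) (pos1 k) (pos1 k)) = _
  rw [Equiv.swap_apply_right]

lemma swap_val_ne (k : Fin (n-1)) (i : KLRSeq n) (j : Fin n)
    (h0 : j ≠ pos0 k) (h1 : j ≠ pos1 k) : (swapSeq k i).1 j = i.1 j := by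
  show i.1 (Equiv.swap (pos0 k) (pos1 k) j) = _
  rw [Equiv.swap_apply_of_ne_of_ne h0 h1]

lemma castZ_eq_iff {x z : ℤ} : ((x : ZMod n) = (z : ZMod n)) ↔ (n : ℤ) ∣ (z - x) := by
  rw [ZMod.intCast_eq_intCast_iff, Int.modEq_iff_dvd]

lemma zmod_eq {x z : ℤ} (h : (n : ℤ) ∣ z - x) : ((x : ZMod n) : ZMod n) = (z : ZMod n) :=
  castZ_eq_iff.mpr h

lemma zmod_ne {x z : ℤ} (h0 : z - x ≠ 0) (hl : -(n : ℤ) < z - x) (hr : z - x < n) :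
    ((x : ZMod n) : ZMod n) ≠ (z : ZMod n) := by
  intro hd
  rw [castZ_eq_iff] at hd
  have := Int.eq_zero_of_dvd_of_natAbs_lt_natAbs hd (by omega)
  omega

lemma cast_add_one (z : ℤ) : ((z : ZMod n)) + 1 = ((z + 1 : ℤ) : ZMod n) := by
  push_cast; ring

lemma adj_yes {w x : ℤ} (hd : (n : ℤ) ∣ w + 1 - x) :
    ((x : ZMod n) : ZMod n) = (w : ZMod n) + 1 := by
  rw [cast_add_one]; exact zmod_eq hd

lemma adj_no {w x : ℤ} (h0 : w + 1 - x ≠ 0) (hl : -(n : ℤ) < w + 1 - x) (hr : w + 1 - x < n) :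
    ((x : ZMod n) : ZMod n) ≠ (w : ZMod n) + 1 := by
  rw [cast_add_one]; exact zmod_ne h0 hl hr

end KLR
namespace KLR

/-- Interval ("hook residue") prefix predicate: the first `k` entries of `f` form the
interval `{-b, …, a}` of residues, built by steps that extend at the max or min end. -/
inductive IS (n : ℕ) (f : Fin n → ZMod n) : ℕ → ℕ → ℕ → Prop
  | base (h0 : 0 < n) (h : f ⟨0, h0⟩ = 0) : IS n f 1 0 0
  | up {k a b : ℕ} (hk : k < n) (prev : IS n f k a b)
      (h : f ⟨k, hk⟩ = (((a : ℤ) + 1 : ℤ) : ZMod n)) : IS n f (k+1) (a+1) b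
  | down {k a b : ℕ} (hk : k < n) (prev : IS n f k a b)
      (h : f ⟨k, hk⟩ = ((-(b : ℤ) - 1 : ℤ) : ZMod n)) : IS n f (k+1) a (b+1)

lemma IS.le_n {n : ℕ} {f : Fin n → ZMod n} {k a b : ℕ} (h : IS n f k a b) : k ≤ n := by
  induction h with
  | base h0 _ => omega
  | up hk _ _ _ => omega
  | down hk _ _ _ => omega

lemma IS.sum {n : ℕ} {f : Fin n → ZMod n} {k a b : ℕ} (h : IS n f k a b) :
    a + b + 1 = k := by
  induction h with
  | base h0 _ => rfl
  | up _ _ _ ih => omega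
  | down _ _ _ ih => omega

lemma IS.congr {n : ℕ} {f g : Fin n → ZMod n} {k a b : ℕ} (h : IS n f k a b)
    (hfg : ∀ j (hj : j < n), j < k → g ⟨j, hj⟩ = f ⟨j, hj⟩) : IS n g k a b := by
  induction h with
  | base h0 h => exact IS.base h0 ((hfg 0 h0 (by omega)).trans h)
  | @up k a b hk prev h ih =>
      exact IS.up hk (ih fun j hj hjk => hfg j hj (by omega)) ((hfg k hk (by omega)).trans h)
  | @down k a b hk prev h ih =>
      exact IS.down hk (ih fun j hj hjk => hfg j hj (by omega)) ((hfg k hk (by omega)).trans h)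

lemma IS.mem {n : ℕ} {f : Fin n → ZMod n} {k a b : ℕ} (h : IS n f k a b) :
    ∀ c : ℤ, -(b : ℤ) ≤ c → c ≤ (a : ℤ) →
      ∃ j, ∃ hj : j < n, j < k ∧ f ⟨j, hj⟩ = (c : ZMod n) := by
  induction h with
  | base h0 h =>
      intro c hc1 hc2
      have hc : c = 0 := by push_cast at hc1 hc2; omega
      subst hc
      exact ⟨0, h0, by omega, by simpa using h⟩
  | @up k a b hk prev h ih =>
      intro c hc1 hc2
      by_cases hca : c ≤ (a : ℤ)
      · obtain ⟨j, hj, hjk, hv⟩ := ih c hc1 hca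
        exact ⟨j, hj, by omega, hv⟩
      · have : c = (a : ℤ) + 1 := by push_cast at hc2; omega
        subst this
        exact ⟨k, hk, by omega, h⟩
  | @down k a b hk prev h ih =>
      intro c hc1 hc2
      by_cases hcb : -(b : ℤ) ≤ c
      · obtain ⟨j, hj, hjk, hv⟩ := ih c hcb hc2
        exact ⟨j, hj, by omega, hv⟩
      · have : c = -(b : ℤ) - 1 := by push_cast at hc1; omega
        subst this
        exact ⟨k, hk, by omega, h⟩

end KLR
namespace KLR

variable {K : Type} [Field K] {n : ℕ}

lemma Zlem (k : ℕ) :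
    ∀ (i : KLRSeq n) (a b : ℕ), IS n i.1 k a b → k + 2 ≤ n → ∀ (hk : k < n),
      (∀ c : ℤ, -(b : ℤ) - 1 ≤ c → c ≤ (a : ℤ) + 1 → i.1 ⟨k, hk⟩ ≠ (c : ZMod n)) →
      e K i = 0 := by
  induction k with
  | zero => intro i a b hIS; cases hIS
  | succ k ih =>
    intro i a b hIS hkn hk hbad
    cases hIS with
    | base h0 h =>
        let κ : Fin (n - 1) := ⟨0, by omega⟩
        have hw : i.1 (pos0 κ) = ((0 : ℤ) : ZMod n) := by
          rw [show ((0 : ℤ) : ZMod n) = 0 by simp]; exact h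
        have h1 : i.1 (pos1 κ) ≠ i.1 (pos0 κ) + 1 := by
          rw [hw, cast_add_one]
          exact hbad ((0 : ℤ) + 1) (by omega) (by omega)
        have h2 : i.1 (pos0 κ) ≠ i.1 (pos1 κ) + 1 := by
          intro hEq
          have hx : i.1 (pos1 κ) = ((-1 : ℤ) : ZMod n) := by
            have hsub := eq_sub_of_add_eq hEq.symm
            rw [hsub, hw]; push_cast; ring
          exact hbad (-1) (by omega) (by omega) hx
        have hx0 : i.1 (pos1 κ) ≠ 0 := by
          have h00 := hbad 0 (by omega) (by omega)
          exact fun hc => h00 (hc.trans (by simp))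
        have hz : e K (swapSeq κ i) = 0 :=
          cyc1' h0 _ (fun hc => hx0 ((swap_val0 κ i).symm.trans hc))
        exact perp0 κ i h1 h2 hz
    | up hk' prev h =>
        rename_i a'
        let κ : Fin (n - 1) := ⟨k, by omega⟩
        have hw : i.1 (pos0 κ) = (((a' : ℤ) + 1 : ℤ) : ZMod n) := h
        have h1 : i.1 (pos1 κ) ≠ i.1 (pos0 κ) + 1 := by
          rw [hw, cast_add_one]
          exact hbad ((a' : ℤ) + 1 + 1) (by omega) (by omega)
        have h2 : i.1 (pos0 κ) ≠ i.1 (pos1 κ) + 1 := by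
          intro hEq
          have hx : i.1 (pos1 κ) = (((a' : ℤ)) : ZMod n) := by
            have hsub := eq_sub_of_add_eq hEq.symm
            rw [hsub, hw]; push_cast; ring
          exact hbad ((a' : ℤ)) (by omega) (by omega) hx
        have hIS' : IS n (swapSeq κ i).1 k a' b :=
          prev.congr fun j hj hjk =>
            swap_val_ne κ i ⟨j, hj⟩ (Fin.ne_of_val_ne (show j ≠ k by omega))
              (Fin.ne_of_val_ne (show j ≠ k + 1 by omega))
        have hz : e K (swapSeq κ i) = 0 := by
          apply ih (swapSeq κ i) a' b hIS' (by omega) hk'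
          intro c hc1 hc2 hEq
          exact hbad c (by omega) (by omega)
            ((swap_val0 κ i).symm.trans hEq)
        exact perp0 κ i h1 h2 hz
    | down hk' prev h =>
        rename_i b'
        let κ : Fin (n - 1) := ⟨k, by omega⟩
        have hw : i.1 (pos0 κ) = ((-(b' : ℤ) - 1 : ℤ) : ZMod n) := h
        have h1 : i.1 (pos1 κ) ≠ i.1 (pos0 κ) + 1 := by
          rw [hw, cast_add_one]
          exact hbad (-(b' : ℤ) - 1 + 1) (by omega) (by omega)
        have h2 : i.1 (pos0 κ) ≠ i.1 (pos1 κ) + 1 := by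
          intro hEq
          have hx : i.1 (pos1 κ) = ((-(b' : ℤ) - 2 : ℤ) : ZMod n) := by
            have hsub := eq_sub_of_add_eq hEq.symm
            rw [hsub, hw]; push_cast; ring
          exact hbad (-(b' : ℤ) - 2) (by omega) (by omega) hx
        have hIS' : IS n (swapSeq κ i).1 k a b' :=
          prev.congr fun j hj hjk =>
            swap_val_ne κ i ⟨j, hj⟩ (Fin.ne_of_val_ne (show j ≠ k by omega))
              (Fin.ne_of_val_ne (show j ≠ k + 1 by omega))
        have hz : e K (swapSeq κ i) = 0 := by
          apply ih (swapSeq κ i) a b' hIS' (by omega) hk'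
          intro c hc1 hc2 hEq
          exact hbad c (by omega) (by omega)
            ((swap_val0 κ i).symm.trans hEq)
        exact perp0 κ i h1 h2 hz

end KLR
namespace KLR

variable {K : Type} [Field K] {n : ℕ}

lemma zmod_eq₀ {x z : ℤ} (h : z - x = 0 ∨ z - x = n ∨ z - x = -(n : ℤ)) :
    ((x : ZMod n) : ZMod n) = (z : ZMod n) := by
  rcases h with h | h | h
  · exact zmod_eq ⟨0, by omega⟩
  · exact zmod_eq ⟨1, by omega⟩
  · exact zmod_eq ⟨-1, by omega⟩

lemma Mlem (hn3 : 3 ≤ n) : ∀ m (i : KLRSeq n) (a b : ℕ) (hm : m + 1 ≤ n - 1),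
    IS n i.1 (m+1) a b → y K (⟨m, by omega⟩ : Fin n) * e K i = 0 := by
  intro m
  induction m with
  | zero =>
    intro i a b hm hIS
    cases hIS with
    | base h0 h => exact cyc0' h0 i h
    | up hk prev h => cases prev
    | down hk prev h => cases prev
  | succ m ih =>
    intro i a b hm hIS
    cases hIS with
    | up hk1 prev h =>
      rename_i a0
      cases prev with
      | base h0 h2 =>
        -- bu : w = 0, x = 1 (here m = 0, a0 = 0, b = 0)
        let κ : Fin (n - 1) := ⟨0, by omega⟩
        have hx : i.1 (pos1 κ) = ((((0:ℕ):ℤ) + 1 : ℤ) : ZMod n) := h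
        have hw : i.1 (pos0 κ) = (((0:ℤ)) : ZMod n) := by
          rw [show (((0:ℤ)) : ZMod n) = 0 by norm_num]; exact h2
        have h1 : i.1 (pos1 κ) = i.1 (pos0 κ) + 1 := by
          rw [hx, hw, cast_add_one]; exact zmod_eq₀ (by omega)
        have h2' : i.1 (pos0 κ) ≠ i.1 (pos1 κ) + 1 := by
          rw [hx, hw, cast_add_one]; exact zmod_ne (by omega) (by omega) (by omega)
        have hz : e K (swapSeq κ i) = 0 := by
          refine cyc1' h0 (swapSeq κ i) (fun hc => ?_)
          have hcc : ((((0:ℕ):ℤ) + 1 : ℤ) : ZMod n) = (((0:ℤ)) : ZMod n) := by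
            rw [show (((0:ℤ)) : ZMod n) = 0 by norm_num]
            exact ((swap_val0 κ i).trans hx).symm.trans hc
          exact zmod_ne (n := n) (x := ((0:ℕ):ℤ) + 1) (z := 0)
            (by omega) (by omega) (by omega) hcc
        have hy : y K (pos0 κ) * e K i = 0 := cyc0' h0 i h2
        exact adjR0 κ i h1 h2' hz hy
      | up hk2 prev2 h2 =>
        -- uu
        rename_i a1
        have hs := prev2.sum
        let κ : Fin (n - 1) := ⟨m, by omega⟩
        have hx : i.1 (pos1 κ) = ((((a1+1:ℕ):ℤ) + 1 : ℤ) : ZMod n) := h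
        have hw : i.1 (pos0 κ) = ((((a1:ℕ):ℤ) + 1 : ℤ) : ZMod n) := h2
        have h1 : i.1 (pos1 κ) = i.1 (pos0 κ) + 1 := by
          rw [hx, hw, cast_add_one]; exact zmod_eq₀ (by omega)
        have h2' : i.1 (pos0 κ) ≠ i.1 (pos1 κ) + 1 := by
          rw [hx, hw, cast_add_one]; exact zmod_ne (by omega) (by omega) (by omega)
        have hISsw : IS n (swapSeq κ i).1 m a1 b :=
          prev2.congr fun j hj hjk =>
            swap_val_ne κ i ⟨j, hj⟩ (Fin.ne_of_val_ne (show j ≠ m by omega))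
              (Fin.ne_of_val_ne (show j ≠ m + 1 by omega))
        have hz : e K (swapSeq κ i) = 0 := by
          apply Zlem m (swapSeq κ i) a1 b hISsw (by omega) (by omega)
          intro c hc1 hc2 hEq
          exact zmod_ne (n := n) (x := ((a1+1:ℕ):ℤ) + 1) (z := c)
            (by omega) (by omega) (by omega)
            (((swap_val0 κ i).trans hx).symm.trans hEq)
        have hy : y K (pos0 κ) * e K i = 0 :=
          ih i (a1+1) b (by omega) (IS.up hk2 prev2 h2)
        exact adjR0 κ i h1 h2' hz hy
      | down hk2 prev2 h2 =>
        -- du : w = -b1-1, x = a0+1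
        rename_i b1
        have hs := prev2.sum
        let κ : Fin (n - 1) := ⟨m, by omega⟩
        have hx : i.1 (pos1 κ) = ((((a0:ℕ):ℤ) + 1 : ℤ) : ZMod n) := h
        have hw : i.1 (pos0 κ) = ((-((b1:ℕ):ℤ) - 1 : ℤ) : ZMod n) := h2
        have h1 : i.1 (pos1 κ) ≠ i.1 (pos0 κ) + 1 := by
          rw [hx, hw, cast_add_one]; exact zmod_ne (by omega) (by omega) (by omega)
        have h2' : i.1 (pos0 κ) ≠ i.1 (pos1 κ) + 1 := by
          rw [hx, hw, cast_add_one]; exact zmod_ne (by omega) (by omega) (by omega)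
        have hISsw : IS n (swapSeq κ i).1 (m+1) (a0+1) b1 := by
          refine IS.up (by omega) ?_ ((swap_val0 κ i).trans hx)
          exact prev2.congr fun j hj hjk =>
            swap_val_ne κ i ⟨j, hj⟩ (Fin.ne_of_val_ne (show j ≠ m by omega))
              (Fin.ne_of_val_ne (show j ≠ m + 1 by omega))
        have hz : y K (pos0 κ) * e K (swapSeq κ i) = 0 :=
          ih (swapSeq κ i) (a0+1) b1 (by omega) hISsw
        exact perp1 κ i h1 h2' hz
    | down hk1 prev h =>
      rename_i b0
      cases prev with
      | base h0 h2 =>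
        -- bd : w = 0, x = -1 (here m = 0, a = 0, b0 = 0)
        let κ : Fin (n - 1) := ⟨0, by omega⟩
        have hx : i.1 (pos1 κ) = ((-((0:ℕ):ℤ) - 1 : ℤ) : ZMod n) := h
        have hw : i.1 (pos0 κ) = (((0:ℤ)) : ZMod n) := by
          rw [show (((0:ℤ)) : ZMod n) = 0 by norm_num]; exact h2
        have h1 : i.1 (pos0 κ) = i.1 (pos1 κ) + 1 := by
          rw [hx, hw, cast_add_one]; exact zmod_eq₀ (by omega)
        have h2' : i.1 (pos1 κ) ≠ i.1 (pos0 κ) + 1 := by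
          rw [hx, hw, cast_add_one]; exact zmod_ne (by omega) (by omega) (by omega)
        have hz : e K (swapSeq κ i) = 0 := by
          refine cyc1' h0 (swapSeq κ i) (fun hc => ?_)
          have hcc : ((-((0:ℕ):ℤ) - 1 : ℤ) : ZMod n) = (((0:ℤ)) : ZMod n) := by
            rw [show (((0:ℤ)) : ZMod n) = 0 by norm_num]
            exact ((swap_val0 κ i).trans hx).symm.trans hc
          exact zmod_ne (n := n) (x := -((0:ℕ):ℤ) - 1) (z := 0)
            (by omega) (by omega) (by omega) hcc
        have hy : y K (pos0 κ) * e K i = 0 := cyc0' h0 i h2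
        exact adjL0 κ i h1 h2' hz hy
      | up hk2 prev2 h2 =>
        -- ud : w = a1+1, x = -b0-1
        rename_i a1
        have hs := prev2.sum
        let κ : Fin (n - 1) := ⟨m, by omega⟩
        have hx : i.1 (pos1 κ) = ((-((b0:ℕ):ℤ) - 1 : ℤ) : ZMod n) := h
        have hw : i.1 (pos0 κ) = ((((a1:ℕ):ℤ) + 1 : ℤ) : ZMod n) := h2
        have h1 : i.1 (pos1 κ) ≠ i.1 (pos0 κ) + 1 := by
          rw [hx, hw, cast_add_one]; exact zmod_ne (by omega) (by omega) (by omega)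
        have h2' : i.1 (pos0 κ) ≠ i.1 (pos1 κ) + 1 := by
          rw [hx, hw, cast_add_one]; exact zmod_ne (by omega) (by omega) (by omega)
        have hISsw : IS n (swapSeq κ i).1 (m+1) a1 (b0+1) := by
          refine IS.down (by omega) ?_ ((swap_val0 κ i).trans hx)
          exact prev2.congr fun j hj hjk =>
            swap_val_ne κ i ⟨j, hj⟩ (Fin.ne_of_val_ne (show j ≠ m by omega))
              (Fin.ne_of_val_ne (show j ≠ m + 1 by omega))
        have hz : y K (pos0 κ) * e K (swapSeq κ i) = 0 :=
          ih (swapSeq κ i) a1 (b0+1) (by omega) hISsw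
        exact perp1 κ i h1 h2' hz
      | down hk2 prev2 h2 =>
        -- dd : w = -b1-1, x = -b1-2
        rename_i b1
        have hs := prev2.sum
        let κ : Fin (n - 1) := ⟨m, by omega⟩
        have hx : i.1 (pos1 κ) = ((-((b1+1:ℕ):ℤ) - 1 : ℤ) : ZMod n) := h
        have hw : i.1 (pos0 κ) = ((-((b1:ℕ):ℤ) - 1 : ℤ) : ZMod n) := h2
        have h1 : i.1 (pos0 κ) = i.1 (pos1 κ) + 1 := by
          rw [hx, hw, cast_add_one]; exact zmod_eq₀ (by omega)
        have h2' : i.1 (pos1 κ) ≠ i.1 (pos0 κ) + 1 := by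
          rw [hx, hw, cast_add_one]; exact zmod_ne (by omega) (by omega) (by omega)
        have hISsw : IS n (swapSeq κ i).1 m a b1 :=
          prev2.congr fun j hj hjk =>
            swap_val_ne κ i ⟨j, hj⟩ (Fin.ne_of_val_ne (show j ≠ m by omega))
              (Fin.ne_of_val_ne (show j ≠ m + 1 by omega))
        have hz : e K (swapSeq κ i) = 0 := by
          apply Zlem m (swapSeq κ i) a b1 hISsw (by omega) (by omega)
          intro c hc1 hc2 hEq
          exact zmod_ne (n := n) (x := -((b1+1:ℕ):ℤ) - 1) (z := c)
            (by omega) (by omega) (by omega)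
            (((swap_val0 κ i).trans hx).symm.trans hEq)
        have hy : y K (pos0 κ) * e K i = 0 :=
          ih i a (b1+1) (by omega) (IS.down hk2 prev2 h2)
        exact adjL0 κ i h1 h2' hz hy

end KLR
namespace KLR

variable {K : Type} [Field K] {n : ℕ}

lemma Flem (hn3 : 3 ≤ n) (m : ℕ) (hm : m + 2 = n) (i : KLRSeq n) (a b : ℕ)
    (hIS : IS n i.1 (m+2) a b) :
    y K (⟨m+1, by omega⟩ : Fin n) * (y K (⟨m+1, by omega⟩ : Fin n) * e K i) = 0 := by
  cases hIS with
  | up hk1 prev h =>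
    rename_i a0
    cases prev with
    | base h0 h2 => omega
    | up hk2 prev2 h2 =>
      -- uu : w = a1+1, x = a1+2 ; adjacent →
      rename_i a1
      have hs := prev2.sum
      let κ : Fin (n - 1) := ⟨m, by omega⟩
      have hx : i.1 (pos1 κ) = ((((a1+1:ℕ):ℤ) + 1 : ℤ) : ZMod n) := h
      have hw : i.1 (pos0 κ) = ((((a1:ℕ):ℤ) + 1 : ℤ) : ZMod n) := h2
      have h1 : i.1 (pos1 κ) = i.1 (pos0 κ) + 1 := by
        rw [hx, hw, cast_add_one]; exact zmod_eq₀ (by omega)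
      have h2' : i.1 (pos0 κ) ≠ i.1 (pos1 κ) + 1 := by
        rw [hx, hw, cast_add_one]; exact zmod_ne (by omega) (by omega) (by omega)
      have hISsw : IS n (swapSeq κ i).1 (m+1) a1 (b+1) := by
        refine IS.down (by omega) ?_ (((swap_val0 κ i).trans hx).trans (zmod_eq₀ (by omega)))
        exact prev2.congr fun j hj hjk =>
          swap_val_ne κ i ⟨j, hj⟩ (Fin.ne_of_val_ne (show j ≠ m by omega))
            (Fin.ne_of_val_ne (show j ≠ m + 1 by omega))
      have hz : y K (pos0 κ) * e K (swapSeq κ i) = 0 :=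
        Mlem hn3 m (swapSeq κ i) a1 (b+1) (by omega) hISsw
      have hy : y K (pos0 κ) * e K i = 0 :=
        Mlem hn3 m i (a1+1) b (by omega) (IS.up hk2 prev2 h2)
      exact adjR1 κ i h1 h2' hz hy
    | down hk2 prev2 h2 =>
      -- du : w = -b1-1, x = a0+1 ; adjacent ← (wraps)
      rename_i b1
      have hs := prev2.sum
      let κ : Fin (n - 1) := ⟨m, by omega⟩
      have hx : i.1 (pos1 κ) = ((((a0:ℕ):ℤ) + 1 : ℤ) : ZMod n) := h
      have hw : i.1 (pos0 κ) = ((-((b1:ℕ):ℤ) - 1 : ℤ) : ZMod n) := h2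
      have h1 : i.1 (pos0 κ) = i.1 (pos1 κ) + 1 := by
        rw [hx, hw, cast_add_one]; exact zmod_eq₀ (by omega)
      have h2' : i.1 (pos1 κ) ≠ i.1 (pos0 κ) + 1 := by
        rw [hx, hw, cast_add_one]; exact zmod_ne (by omega) (by omega) (by omega)
      have hISsw : IS n (swapSeq κ i).1 (m+1) (a0+1) b1 := by
        refine IS.up (by omega) ?_ ((swap_val0 κ i).trans hx)
        exact prev2.congr fun j hj hjk =>
          swap_val_ne κ i ⟨j, hj⟩ (Fin.ne_of_val_ne (show j ≠ m by omega))
            (Fin.ne_of_val_ne (show j ≠ m + 1 by omega))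
      have hz : y K (pos0 κ) * e K (swapSeq κ i) = 0 :=
        Mlem hn3 m (swapSeq κ i) (a0+1) b1 (by omega) hISsw
      have hy : y K (pos0 κ) * e K i = 0 :=
        Mlem hn3 m i a0 (b1+1) (by omega) (IS.down hk2 prev2 h2)
      exact adjL1 κ i h1 h2' hz hy
  | down hk1 prev h =>
    rename_i b0
    cases prev with
    | base h0 h2 => omega
    | up hk2 prev2 h2 =>
      -- ud : w = a1+1, x = -b0-1 ; adjacent → (wraps)
      rename_i a1
      have hs := prev2.sum
      let κ : Fin (n - 1) := ⟨m, by omega⟩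
      have hx : i.1 (pos1 κ) = ((-((b0:ℕ):ℤ) - 1 : ℤ) : ZMod n) := h
      have hw : i.1 (pos0 κ) = ((((a1:ℕ):ℤ) + 1 : ℤ) : ZMod n) := h2
      have h1 : i.1 (pos1 κ) = i.1 (pos0 κ) + 1 := by
        rw [hx, hw, cast_add_one]; exact zmod_eq₀ (by omega)
      have h2' : i.1 (pos0 κ) ≠ i.1 (pos1 κ) + 1 := by
        rw [hx, hw, cast_add_one]; exact zmod_ne (by omega) (by omega) (by omega)
      have hISsw : IS n (swapSeq κ i).1 (m+1) a1 (b0+1) := by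
        refine IS.down (by omega) ?_ ((swap_val0 κ i).trans hx)
        exact prev2.congr fun j hj hjk =>
          swap_val_ne κ i ⟨j, hj⟩ (Fin.ne_of_val_ne (show j ≠ m by omega))
            (Fin.ne_of_val_ne (show j ≠ m + 1 by omega))
      have hz : y K (pos0 κ) * e K (swapSeq κ i) = 0 :=
        Mlem hn3 m (swapSeq κ i) a1 (b0+1) (by omega) hISsw
      have hy : y K (pos0 κ) * e K i = 0 :=
        Mlem hn3 m i (a1+1) b0 (by omega) (IS.up hk2 prev2 h2)
      exact adjR1 κ i h1 h2' hz hy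
    | down hk2 prev2 h2 =>
      -- dd : w = -b1-1, x = -b1-2 ; adjacent ←
      rename_i b1
      have hs := prev2.sum
      let κ : Fin (n - 1) := ⟨m, by omega⟩
      have hx : i.1 (pos1 κ) = ((-((b1+1:ℕ):ℤ) - 1 : ℤ) : ZMod n) := h
      have hw : i.1 (pos0 κ) = ((-((b1:ℕ):ℤ) - 1 : ℤ) : ZMod n) := h2
      have h1 : i.1 (pos0 κ) = i.1 (pos1 κ) + 1 := by
        rw [hx, hw, cast_add_one]; exact zmod_eq₀ (by omega)
      have h2' : i.1 (pos1 κ) ≠ i.1 (pos0 κ) + 1 := by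
        rw [hx, hw, cast_add_one]; exact zmod_ne (by omega) (by omega) (by omega)
      have hISsw : IS n (swapSeq κ i).1 (m+1) (a+1) b1 := by
        refine IS.up (by omega) ?_ (((swap_val0 κ i).trans hx).trans (zmod_eq₀ (by omega)))
        exact prev2.congr fun j hj hjk =>
          swap_val_ne κ i ⟨j, hj⟩ (Fin.ne_of_val_ne (show j ≠ m by omega))
            (Fin.ne_of_val_ne (show j ≠ m + 1 by omega))
      have hz : y K (pos0 κ) * e K (swapSeq κ i) = 0 :=
        Mlem hn3 m (swapSeq κ i) (a+1) b1 (by omega) hISsw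
      have hy : y K (pos0 κ) * e K i = 0 :=
        Mlem hn3 m i a (b1+1) (by omega) (IS.down hk2 prev2 h2)
      exact adjL1 κ i h1 h2' hz hy

end KLR
namespace KLR

variable {K : Type} [Field K] {n : ℕ}

lemma Clem (hn2 : 2 ≤ n) (i : KLRSeq n) : (∃ a b, IS n i.1 n a b) ∨ e K i = 0 := by
  have H : ∀ k, 1 ≤ k → k ≤ n → (∃ a b, IS n i.1 k a b) ∨ e K i = 0 := by
    intro k
    induction k with
    | zero => intro h; exact absurd h (by omega)
    | succ k ihk =>
      intro _ hkn
      rcases Nat.eq_zero_or_pos k with rfl | hk1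
      · by_cases h0 : i.1 ⟨0, by omega⟩ = 0
        · exact Or.inl ⟨0, 0, IS.base (by omega) h0⟩
        · exact Or.inr (cyc1' (by omega) i h0)
      · rcases ihk (by omega) (by omega) with ⟨a, b, hIS⟩ | hz
        · have hk : k < n := by omega
          have hsum := hIS.sum
          by_cases hup : i.1 ⟨k, hk⟩ = (((a : ℤ) + 1 : ℤ) : ZMod n)
          · exact Or.inl ⟨a+1, b, IS.up hk hIS hup⟩
          by_cases hdn : i.1 ⟨k, hk⟩ = ((-(b : ℤ) - 1 : ℤ) : ZMod n)
          · exact Or.inl ⟨a, b+1, IS.down hk hIS hdn⟩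
          have hinj : Function.Injective i.1 := i.2.1
          have hmem : ∀ c : ℤ, -(b : ℤ) ≤ c → c ≤ (a : ℤ) → i.1 ⟨k, hk⟩ ≠ (c : ZMod n) := by
            intro c hc1 hc2 hEq
            obtain ⟨j, hj, hjk, hv⟩ := hIS.mem c hc1 hc2
            have hkj : (⟨k, hk⟩ : Fin n) = ⟨j, hj⟩ := hinj (hEq.trans hv.symm)
            have hkj' : k = j := by simpa using hkj
            omega
          rcases Nat.lt_or_ge (k+1) n with hlt | hge
          · refine Or.inr (Zlem k i a b hIS (by omega) hk ?_)
            intro c hc1 hc2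
            by_cases hca : c = (a : ℤ) + 1
            · subst hca; exact hup
            by_cases hcb : c = -(b : ℤ) - 1
            · subst hcb; exact hdn
            · exact hmem c (by omega) (by omega)
          · exfalso
            have hkn1 : k = n - 1 := by omega
            haveI : NeZero n := ⟨by omega⟩
            have hginj : Function.Injective
                (fun j : Fin n => ((-(b:ℤ) + ((j:ℕ):ℤ) : ℤ) : ZMod n)) := by
              intro j1 j2 hEq
              simp only at hEq
              rw [castZ_eq_iff] at hEq
              have hlt1 := j1.isLt
              have hlt2 := j2.isLt
              have := Int.eq_zero_of_dvd_of_natAbs_lt_natAbs hEq (by omega)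
              exact Fin.ext (by omega)
            have hbij := (Fintype.bijective_iff_injective_and_card _).mpr
              ⟨hginj, by simp [ZMod.card]⟩
            obtain ⟨j, hj⟩ := hbij.2 (i.1 ⟨k, hk⟩)
            rcases Nat.lt_or_ge (j : ℕ) (n-1) with hjlt | hjge
            · exact hmem (-(b:ℤ) + ((j:ℕ):ℤ)) (by omega) (by omega) hj.symm
            · apply hup
              have hlt1 := j.isLt
              have hjv : (-(b:ℤ) + ((j:ℕ):ℤ)) = (a:ℤ) + 1 := by omega
              rw [← hj]
              show ((-(b:ℤ) + ((j:ℕ):ℤ) : ℤ) : ZMod n) = (((a : ℤ) + 1 : ℤ) : ZMod n)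
              rw [hjv]
        · exact Or.inr hz
  exact H n (by omega) le_rfl

end KLR

/-- for `n ≥ 2` and `i ∈ I_n` with `e(i) ≠ 0` in `R_n`, `y_n² e(i) = 0`. -/
theorem stmt_9 (K : Type) [Field K] (n : ℕ) (hn : 2 ≤ n) (i : KLRSeq n)
    (h : KLR.e K i ≠ 0) :
    KLR.y K (⟨n - 1, by omega⟩ : Fin n) ^ 2 * KLR.e K i = 0 := by
  by_cases hz : KLR.e K i = 0
  · rw [hz, mul_zero]
  rcases Nat.lt_or_ge n 3 with hn2' | hn3
  · -- the case n = 2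
    have hn2 : n = 2 := by omega
    subst hn2
    have h0 : i.1 ⟨0, by omega⟩ = 0 := by
      by_contra h0
      exact hz (KLR.cyc1' (by omega) i h0)
    have h1v : i.1 ⟨1, by omega⟩ = 1 := by
      have hne : i.1 ⟨1, by omega⟩ ≠ i.1 ⟨0, by omega⟩ := by
        intro hEq
        have := i.2.1 hEq
        exact absurd this (by decide)
      rw [h0] at hne
      have hall : ∀ x : ZMod 2, x ≠ 0 → x = 1 := by decide
      exact hall _ hne
    let κ : Fin (2-1) := ⟨0, by omega⟩
    have hb : i.1 (KLR.pos1 κ) = i.1 (KLR.pos0 κ) + 1 := by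
      rw [show i.1 (KLR.pos1 κ) = 1 from h1v, show i.1 (KLR.pos0 κ) = 0 from h0]; decide
    have ha : i.1 (KLR.pos0 κ) = i.1 (KLR.pos1 κ) + 1 := by
      rw [show i.1 (KLR.pos1 κ) = 1 from h1v, show i.1 (KLR.pos0 κ) = 0 from h0]; decide
    have hq := KLR.sq_both (K := K) κ i hb ha
    have hsw : KLR.e K (KLR.swapSeq κ i) = 0 := by
      refine KLR.cyc1' (by omega) _ ?_
      intro hc
      have hval : i.1 (KLR.pos1 κ) = 0 := (KLR.swap_val0 κ i).symm.trans hc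
      exact absurd ((show i.1 (KLR.pos1 κ) = 1 from h1v).symm.trans hval) (by decide)
    rw [KLR.pp_zero κ i hsw] at hq
    have hy0 : KLR.y K (KLR.pos0 κ) * KLR.e K i = 0 := KLR.cyc0' (by omega) i h0
    have hy01 : KLR.y K (KLR.pos0 κ) * (KLR.y K (KLR.pos1 κ) * KLR.e K i) = 0 := by
      rw [← mul_assoc, KLR.yy (KLR.pos0 κ) (KLR.pos1 κ), mul_assoc, hy0, mul_zero]
    rw [sub_mul (KLR.y K (KLR.pos0 κ)) (KLR.y K (KLR.pos1 κ)) (KLR.e K i), hy0,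
      mul_sub, mul_zero] at hq
    have h' := hq.symm
    rw [sub_eq_zero] at h'
    have hX := h'.symm
    rw [sub_mul, hy01, sub_zero] at hX
    rw [pow_two, mul_assoc]
    exact hX
  · rcases KLR.Clem (K := K) (by omega) i with ⟨a, b, hIS⟩ | hz'
    · have hIS' : KLR.IS n i.1 (n-2+2) a b := by rwa [show n-2+2 = n by omega]
      have hF := KLR.Flem (K := K) hn3 (n-2) (by omega) i a b hIS'
      have hfin : (⟨n-2+1, by omega⟩ : Fin n) = ⟨n-1, by omega⟩ :=
        Fin.ext (show n-2+1 = n-1 by omega)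
      rw [hfin] at hF
      rw [pow_two, mul_assoc]
      exact hF
    · exact absurd hz' hz
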